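/- Deletion of a parallel hyperplane: Let A = {H₁,…,Hₙ} be an arrangement in K^k with H_i = H_j for some i ≠ j (equal as multiset members, i.e., α_i, α_j parallel). Then the restriction of the discriminantal arrangement B(A) to the hyperplane D_{ij} = {t : t lies so that H_i^{t_i} = H_j^{t_j}} is linearly equivalent to the discriminantal arrangement B(A \ H_i); the equivalence is induced by the isomorphism D_{ij} ≅ K^{n−1}, t ↦ (t_l)_{l ≠ i}. -/

import Mathlib

variable {K : Type*} [Field K] {ι : Type*} {k : ℕ}

/-- The subspace `D_S` of translation vectors `t` for which the translated
hyperplanes `{x | ⟨α i, x⟩ = t i}`, `i ∈ S`, have a common point. -/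
def DSub (α : ι → Fin k → K) (S : Set ι) : Submodule K (ι → K) where
  carrier := {t | ∃ x : Fin k → K, ∀ i ∈ S, ∑ j, α i j * x j = t i}
  zero_mem' := ⟨0, fun i _ => by simp⟩
  add_mem' := by
    rintro a b ⟨x, hx⟩ ⟨y, hy⟩
    exact ⟨x + y, fun i hi => by simp [mul_add, Finset.sum_add_distrib, hx i hi, hy i hi]⟩
  smul_mem' := by
    rintro c a ⟨x, hx⟩
    refine ⟨c • x, fun i hi => ?_⟩
    simp only [Pi.smul_apply, smul_eq_mul, ← hx i hi, Finset.mul_sum]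
    congr 1; ext j; ring

/-- `C` is a circuit of the (multi)arrangement with normals `α`: a minimal linearly
dependent set of normals. -/
def IsCircuit (α : ι → Fin k → K) (C : Set ι) : Prop :=
  (¬ LinearIndependent K (fun l : C => α l)) ∧
    ∀ l ∈ C, LinearIndependent K (fun m : ((C \ {l} : Set ι)) => α m)

lemma mem_DSub {α : ι → Fin k → K} {S : Set ι} {t : ι → K} :
    t ∈ DSub α S ↔ ∃ x : Fin k → K, ∀ i ∈ S, ∑ j, α i j * x j = t i := Iff.rfl

lemma li_congr {M : Type*} [AddCommGroup M] [Module K M] {ι' ι'' : Type*} (e : ι'' ≃ ι')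
    {v : ι' → M} {w : ι'' → M} (d : ι'' → K) (hd : ∀ m, d m ≠ 0)
    (hw : ∀ m, w m = d m • v (e m)) : LinearIndependent K w ↔ LinearIndependent K v := by
  constructor
  · intro h
    have h2 := h.units_smul (fun m => (Units.mk0 (d m) (hd m))⁻¹)
    have h3 : ((fun m => (Units.mk0 (d m) (hd m))⁻¹) • w) = v ∘ e := funext fun m => by
      simp [hw m, Units.smul_def, smul_smul, inv_mul_cancel₀ (hd m)]
    rw [h3] at h2
    exact (linearIndependent_equiv e).mp h2
  · intro h
    have hwe : w = (fun m => Units.mk0 (d m) (hd m)) • (v ∘ e) := funext fun m => by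
      simp [hw m, Units.smul_def]
    rw [hwe]
    exact ((linearIndependent_equiv e).mpr h).units_smul _

lemma li_restrict_congr {ι' : Type*} {α : ι → Fin k → K} {α' : ι' → Fin k → K}
    (φ : ι' → ι) {S' : Set ι'} {S : Set ι} (hφ : Set.BijOn φ S' S)
    (d : ι' → K) (hd : ∀ m ∈ S', d m ≠ 0) (hs : ∀ m ∈ S', α' m = d m • α (φ m)) :
    LinearIndependent K (fun m : S' => α' m) ↔ LinearIndependent K (fun l : S => α l) := by
  refine li_congr (hφ.equiv φ) (fun m => d m) (fun m => hd m m.2) (fun m => ?_)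
  have h1 : ((hφ.equiv φ m : S) : ι) = φ m := by
    simp [Set.BijOn.equiv]
  show α' m = d m • α ((hφ.equiv φ m : S) : ι)
  rw [h1]
  exact hs m m.2

lemma bijOn_diff {ι' ι'' : Type*} {φ : ι'' → ι'} {S' : Set ι''} {S : Set ι'}
    (hφ : Set.BijOn φ S' S) {m : ι''} (hm : m ∈ S') :
    Set.BijOn φ (S' \ {m}) (S \ {φ m}) := by
  refine ⟨fun x hx => ⟨hφ.mapsTo hx.1, fun hxe => hx.2 (hφ.injOn hx.1 hm hxe)⟩,
    hφ.injOn.mono Set.diff_subset, fun y hy => ?_⟩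
  obtain ⟨x, hx, rfl⟩ := hφ.surjOn hy.1
  exact ⟨x, ⟨hx, fun h => hy.2 (by simp only [Set.mem_singleton_iff] at h ⊢; rw [h])⟩, rfl⟩

lemma isCircuit_congr {ι' : Type*} {α : ι → Fin k → K} {α' : ι' → Fin k → K}
    (φ : ι' → ι) {C' : Set ι'} {C : Set ι} (hφ : Set.BijOn φ C' C)
    (d : ι' → K) (hd : ∀ m ∈ C', d m ≠ 0) (hs : ∀ m ∈ C', α' m = d m • α (φ m)) :
    IsCircuit α' C' ↔ IsCircuit α C := by
  unfold IsCircuit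
  constructor
  · rintro ⟨h1, h2⟩
    refine ⟨fun h => h1 ((li_restrict_congr φ hφ d hd hs).mpr h), fun l hl => ?_⟩
    obtain ⟨m, hm, rfl⟩ := hφ.surjOn hl
    exact (li_restrict_congr φ (bijOn_diff hφ hm) d (fun x hx => hd x hx.1)
      (fun x hx => hs x hx.1)).mp (h2 m hm)
  · rintro ⟨h1, h2⟩
    refine ⟨fun h => h1 ((li_restrict_congr φ hφ d hd hs).mp h), fun m hm => ?_⟩
    exact (li_restrict_congr φ (bijOn_diff hφ hm) d (fun x hx => hd x hx.1)
      (fun x hx => hs x hx.1)).mpr (h2 (φ m) (hφ.mapsTo hm))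

/-- deletion of a parallel hyperplane: if `H_i = H_j` (`α i = c • α j`,
`c ≠ 0`, `i ≠ j`), then the linear map `π : t ↦ (t_l)_{l ≠ i}` maps `D_{ij}`
bijectively onto `K^{n−1}`, and carries the restriction of the discriminantal
arrangement `B(A)` to the hyperplane `D_{ij}` onto the discriminantal arrangement
`B(A \ H_i)`: the family of images of `D_C ∩ D_{ij}` (over circuits `C` of `A` with
`D_C ≠ D_{ij}`) equals the family of hyperplanes `D_{C'}` over circuits `C'` of
`A \ H_i`. -/
theorem deletion_parallel_discriminantal {K : Type*} [Field K] {n k : ℕ}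
    (α : Fin n → (Fin k → K)) (hα : ∀ l, α l ≠ 0)
    (i j : Fin n) (hij : i ≠ j) (c : K) (hc : c ≠ 0) (hpar : α i = c • α j) :
    Set.InjOn (LinearMap.funLeft K K (Subtype.val : {l : Fin n // l ≠ i} → Fin n))
        (DSub α {i, j} : Set (Fin n → K)) ∧
    (LinearMap.funLeft K K (Subtype.val : {l : Fin n // l ≠ i} → Fin n)) ''
        (DSub α {i, j} : Set (Fin n → K)) = Set.univ ∧
    {X : Set ({l : Fin n // l ≠ i} → K) |
        ∃ C : Set (Fin n), IsCircuit α C ∧ DSub α C ≠ DSub α {i, j} ∧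
          X = (LinearMap.funLeft K K (Subtype.val : {l : Fin n // l ≠ i} → Fin n)) ''
            ((DSub α C : Set (Fin n → K)) ∩ (DSub α {i, j} : Set (Fin n → K)))} =
      {X : Set ({l : Fin n // l ≠ i} → K) |
        ∃ C' : Set {l : Fin n // l ≠ i},
          IsCircuit (fun l : {l : Fin n // l ≠ i} => α l.val) C' ∧
          X = (DSub (fun l : {l : Fin n // l ≠ i} => α l.val) C' :
            Set ({l : Fin n // l ≠ i} → K))} := by
  set π := (LinearMap.funLeft K K (Subtype.val : {l : Fin n // l ≠ i} → Fin n)) with hπ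
  set α' := (fun l : {l : Fin n // l ≠ i} => α l.val) with hα'
  have hji : j ≠ i := Ne.symm hij
  -- characterization of D_{ij}
  have mem_ij : ∀ t : Fin n → K, t ∈ DSub α ({i, j} : Set (Fin n)) ↔ t i = c * t j := by
    intro t
    constructor
    · rintro ⟨x, hx⟩
      have h1 := hx i (Set.mem_insert i {j})
      have h2 := hx j (Set.mem_insert_of_mem i rfl)
      rw [← h1, ← h2, hpar, Finset.mul_sum]
      congr 1; ext q; simp [mul_assoc]
    · intro ht
      obtain ⟨m, hm⟩ := Function.ne_iff.mp (hα j)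
      have hm' : α j m ≠ 0 := by simpa using hm
      refine ⟨fun q => if q = m then t j / α j m else 0, ?_⟩
      have hsum : ∀ β : Fin k → K,
          ∑ q, β q * (if q = m then t j / α j m else 0) = β m * (t j / α j m) := by
        intro β
        rw [Finset.sum_eq_single m (fun q _ hq => by simp [hq]) (by simp)]
        simp
      intro l hl
      rcases hl with rfl | hl
      · rw [hsum, hpar, ht]
        simp only [Pi.smul_apply, smul_eq_mul]
        field_simp
      · simp only [Set.mem_singleton_iff] at hl
        subst hl
        rw [hsum]
        field_simp
  -- the extension map
  set T : ({l : Fin n // l ≠ i} → K) → (Fin n → K) :=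
    fun s l => if h : l = i then c * s ⟨j, hji⟩ else s ⟨l, h⟩ with hT
  have hTπ : ∀ s, π (T s) = s := by
    intro s
    funext m
    show T s m.val = s m
    rw [show T s m.val = s ⟨m.val, m.2⟩ from dif_neg m.2]
  have hTij : ∀ s, T s ∈ DSub α ({i, j} : Set (Fin n)) := by
    intro s
    rw [mem_ij]
    rw [show T s i = c * s ⟨j, hji⟩ from dif_pos rfl,
      show T s j = s ⟨j, hji⟩ from dif_neg hji]
  -- image lemma, case i ∉ C
  have himg : ∀ C : Set (Fin n), i ∉ C →
      π '' ((DSub α C : Set (Fin n → K)) ∩ (DSub α ({i, j} : Set (Fin n)) : Set (Fin n → K))) =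
        (DSub α' (Subtype.val ⁻¹' C) : Set ({l : Fin n // l ≠ i} → K)) := by
    intro C hiC
    ext s
    constructor
    · rintro ⟨t, ⟨⟨x, hx⟩, _⟩, rfl⟩
      exact ⟨x, fun m hm => hx m.val hm⟩
    · rintro ⟨x, hx⟩
      refine ⟨T s, ⟨⟨x, fun l hl => ?_⟩, hTij s⟩, hTπ s⟩
      have hli : l ≠ i := fun h => hiC (h ▸ hl)
      rw [show T s l = s ⟨l, hli⟩ from dif_neg hli]
      exact hx ⟨l, hli⟩ hl
  -- image lemma, case i ∈ C, j ∉ C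
  have himg2 : ∀ C : Set (Fin n), i ∈ C → j ∉ C →
      π '' ((DSub α C : Set (Fin n → K)) ∩ (DSub α ({i, j} : Set (Fin n)) : Set (Fin n → K))) =
        (DSub α' (Subtype.val ⁻¹' ((C \ {i}) ∪ {j})) : Set ({l : Fin n // l ≠ i} → K)) := by
    intro C hiC hjC
    ext s
    constructor
    · rintro ⟨t, ⟨⟨x, hx⟩, htij⟩, rfl⟩
      refine ⟨x, fun m hm => ?_⟩
      rcases hm with hm | hm
      · exact hx m.val hm.1
      · simp only [Set.mem_singleton_iff] at hm
        show ∑ q, α m.val q * x q = t m.val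
        rw [hm]
        have h1 := hx i hiC
        have h2 := (mem_ij t).mp htij
        have h3 : ∑ q, α i q * x q = c * ∑ q, α j q * x q := by
          rw [hpar, Finset.mul_sum]
          congr 1; ext q; simp [mul_assoc]
        exact mul_left_cancel₀ hc (by rw [← h3, h1, h2])
    · rintro ⟨x, hx⟩
      have hjmem : (⟨j, hji⟩ : {l : Fin n // l ≠ i}) ∈
          (Subtype.val ⁻¹' ((C \ {i}) ∪ {j}) : Set {l : Fin n // l ≠ i}) := Or.inr rfl
      refine ⟨T s, ⟨⟨x, fun l hl => ?_⟩, hTij s⟩, hTπ s⟩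
      by_cases hli : l = i
      · subst hli
        rw [show T s l = c * s ⟨j, hji⟩ from dif_pos rfl, ← hx _ hjmem]
        rw [hpar, Finset.mul_sum]
        congr 1; ext q; simp [mul_assoc, hα']
      · rw [show T s l = s ⟨l, hli⟩ from dif_neg hli]
        exact hx ⟨l, hli⟩ (Or.inl ⟨hl, hli⟩)
  refine ⟨?_, ?_, ?_⟩
  · -- injectivity on D_{ij}
    intro a ha b hb h
    funext l
    by_cases hl : l = i
    · subst hl
      rw [(mem_ij a).mp ha, (mem_ij b).mp hb]
      rw [show a j = b j from congrFun h ⟨j, hji⟩]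
    · exact congrFun h ⟨l, hl⟩
  · -- surjectivity
    ext s
    simp only [Set.mem_univ, iff_true, Set.mem_image]
    exact ⟨T s, hTij s, hTπ s⟩
  · -- the arrangements coincide
    ext X
    simp only [Set.mem_setOf_eq]
    constructor
    · rintro ⟨C, hC, hne, rfl⟩
      by_cases hiC : i ∈ C
      · -- i ∈ C: then C ≠ {i,j}, so j ∉ C; replace i by j
        have hCne : C ≠ ({i, j} : Set (Fin n)) := fun h => hne (by rw [h])
        have hjC : j ∉ C := by
          intro hjC
          have hsub : ({i, j} : Set (Fin n)) ⊆ C := by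
            intro x hx
            rcases hx with rfl | hx
            · exact hiC
            · simp only [Set.mem_singleton_iff] at hx; subst hx; exact hjC
          have hss : ({i, j} : Set (Fin n)) ⊂ C :=
            hsub.ssubset_of_ne (fun h => hCne h.symm)
          obtain ⟨l, hlC, hl⟩ := Set.exists_of_ssubset hss
          have hil : i ≠ l := fun h => hl (h ▸ Set.mem_insert i {j})
          have hjl : j ≠ l := fun h => hl (h ▸ Set.mem_insert_of_mem i rfl)
          have hli := hC.2 l hlC
          set a : ↥(C \ ({l} : Set (Fin n))) := ⟨i, hiC, hil⟩ with hadef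
          set b : ↥(C \ ({l} : Set (Fin n))) := ⟨j, hjC, hjl⟩ with hbdef
          have hab : a ∉ ({b} : Set ↥(C \ ({l} : Set (Fin n)))) := by
            simp only [Set.mem_singleton_iff]
            intro h
            exact hij (congrArg Subtype.val h)
          have := hli.notMem_span_image (s := {b}) hab
          apply this
          rw [Set.image_singleton]
          exact Submodule.mem_span_singleton.mpr ⟨c, hpar.symm⟩
        -- the swap map
        set φ : {l : Fin n // l ≠ i} → Fin n := fun m => if m.val = j then i else m.val with hφdef
        set C' : Set {l : Fin n // l ≠ i} := Subtype.val ⁻¹' ((C \ {i}) ∪ {j}) with hC'def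
        have hbij : Set.BijOn φ C' C := by
          refine ⟨?_, ?_, ?_⟩
          · rintro m (hm | hm)
            · have hmj : m.val ≠ j := fun h => hjC (h ▸ hm.1)
              show (if m.val = j then i else m.val) ∈ C
              rw [if_neg hmj]; exact hm.1
            · simp only [Set.mem_preimage, Set.mem_singleton_iff] at hm
              show (if m.val = j then i else m.val) ∈ C
              rw [if_pos hm]; exact hiC
          · intro m₁ hm₁ m₂ hm₂ h
            by_cases h1 : m₁.val = j <;> by_cases h2 : m₂.val = j
            · exact Subtype.ext (h1.trans h2.symm)
            · simp only [hφdef, if_pos h1, if_neg h2] at h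
              exact absurd h.symm m₂.2
            · simp only [hφdef, if_pos h2, if_neg h1] at h
              exact absurd h m₁.2
            · simp only [hφdef, if_neg h1, if_neg h2] at h
              exact Subtype.ext h
          · intro l hl
            by_cases hli : l = i
            · subst hli
              refine ⟨⟨j, hji⟩, Or.inr rfl, ?_⟩
              show (if j = j then l else j) = l
              rw [if_pos rfl]
            · have hlj : l ≠ j := fun h => hjC (h ▸ hl)
              refine ⟨⟨l, hli⟩, Or.inl ⟨hl, hli⟩, ?_⟩
              show (if l = j then i else l) = l
              rw [if_neg hlj]
        set d : {l : Fin n // l ≠ i} → K := fun m => if m.val = j then c⁻¹ else 1 with hddef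
        have hd : ∀ m ∈ C', d m ≠ 0 := by
          intro m _
          by_cases h : m.val = j
          · simp [hddef, h, hc]
          · simp [hddef, h]
        have hs : ∀ m ∈ C', α' m = d m • α (φ m) := by
          intro m _
          by_cases h : m.val = j
          · simp only [hα', hddef, hφdef, if_pos h, h]
            rw [hpar, smul_smul, inv_mul_cancel₀ hc, one_smul]
          · simp [hα', hddef, hφdef, if_neg h]
        exact ⟨C', (isCircuit_congr φ hbij d hd hs).mpr hC, (himg2 C hiC hjC).symm ▸ rfl⟩
      · -- i ∉ C: keep C
        set C' : Set {l : Fin n // l ≠ i} := Subtype.val ⁻¹' C with hC'def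
        have hbij : Set.BijOn (Subtype.val : {l : Fin n // l ≠ i} → Fin n) C' C := by
          refine ⟨fun m hm => hm, Subtype.val_injective.injOn, fun l hl => ?_⟩
          exact ⟨⟨l, fun h => hiC (h ▸ hl)⟩, hl, rfl⟩
        refine ⟨C', (isCircuit_congr Subtype.val hbij (fun _ => 1) (fun _ _ => one_ne_zero)
          (fun m _ => by simp [hα'])).mpr hC, ?_⟩
        rw [himg C hiC]
    · rintro ⟨C', hC', rfl⟩
      set C : Set (Fin n) := Subtype.val '' C' with hCdef
      have hiC : i ∉ C := by
        rintro ⟨m, _, h⟩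
        exact m.2 h
      have hbij : Set.BijOn (Subtype.val : {l : Fin n // l ≠ i} → Fin n) C' C :=
        Subtype.val_injective.injOn.bijOn_image
      refine ⟨C, (isCircuit_congr Subtype.val hbij (fun _ => 1) (fun _ _ => one_ne_zero)
        (fun m _ => by simp [hα'])).mp hC', ?_, ?_⟩
      · -- D_C ≠ D_{ij}
        intro h
        have he : (fun l => if l = i then (1 : K) else 0) ∈ DSub α C := by
          refine ⟨0, fun l hl => ?_⟩
          simp [if_neg (show l ≠ i from fun h' => hiC (h' ▸ hl))]
        rw [h, mem_ij] at he
        rw [if_pos rfl, if_neg hji] at he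
        simp at he
      · rw [himg C hiC, hCdef, Set.preimage_image_eq C' Subtype.val_injective]
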